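/- For every n ∈ ℕ, with ω = (−1 + √−3)/2 ∈ ℂ a primitive cube root of unity, one has (−1)^n · T_n = Σ_{k=0}^{n} C(n,k)^2 · ω^{2k−n}, and the same identity holds with ω replaced by its complex conjugate ω̄. -/
import Mathlib

open Complex in
/-- `ω = (-1 + √-3)/2`, a primitive cube root of unity. -/
noncomputable def omegaC : ℂ := (-1 + Real.sqrt 3 * Complex.I) / 2

/-- The central trinomial coefficient: the coefficient of `x^n` in `(x^2+x+1)^n`. -/
def centralTrinomial (n : ℕ) : ℕ :=
  ∑ k ∈ Finset.range (n / 2 + 1), Nat.choose n (2 * k) * Nat.choose (2 * k) k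

open Polynomial Finset

lemma sqrt3_sq : ((Real.sqrt 3 : ℝ) : ℂ) ^ 2 = 3 := by
  rw [← Complex.ofReal_pow, Real.sq_sqrt (by norm_num : (0:ℝ) ≤ 3)]
  norm_num

lemma conj_omegaC : (starRingEnd ℂ) omegaC = (-1 - Real.sqrt 3 * Complex.I) / 2 := by
  unfold omegaC
  rw [map_div₀]
  simp [Complex.conj_I, Complex.conj_ofReal, map_ofNat]
  ring

lemma omega_mul_conj : omegaC * (starRingEnd ℂ) omegaC = 1 := by
  rw [conj_omegaC]
  unfold omegaC
  rw [div_mul_div_comm]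
  have h1 : (-1 + (Real.sqrt 3 : ℂ) * Complex.I) * (-1 - (Real.sqrt 3 : ℂ) * Complex.I) = 4 := by
    linear_combination (-3) * Complex.I_sq + (-(Complex.I ^ 2)) * sqrt3_sq
  rw [h1]
  norm_num

lemma omega_add_conj : omegaC + (starRingEnd ℂ) omegaC = -1 := by
  rw [conj_omegaC]
  unfold omegaC
  ring

lemma coeff_one_add_X_sq_pow (m : ℕ) :
    ((1 + X ^ 2 : ℂ[X]) ^ m).coeff m
      = if Even m then (m.choose (m / 2) : ℂ) else 0 := by
  rw [add_pow, finset_sum_coeff]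
  have hterm : ∀ k ∈ Finset.range (m + 1),
      ((1 : ℂ[X]) ^ k * (X ^ 2) ^ (m - k) * (m.choose k : ℂ[X])).coeff m
        = if m = 2 * (m - k) then (m.choose k : ℂ) else 0 := by
    intro k hk
    rw [one_pow, one_mul, ← pow_mul, ← C_eq_natCast, coeff_mul_C, coeff_X_pow]
    split <;> simp
  rw [Finset.sum_congr rfl hterm]
  by_cases hm : Even m
  · obtain ⟨t, ht⟩ := hm
    have htm : m / 2 = t := by omega
    rw [if_pos ⟨t, ht⟩, Finset.sum_eq_single t]
    · rw [if_pos (by omega), htm]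
    · intro b hb hbt
      rw [Finset.mem_range] at hb
      rw [if_neg (by omega)]
    · intro h
      exact absurd (Finset.mem_range.mpr (by omega)) h
  · rw [if_neg hm]
    apply Finset.sum_eq_zero
    intro k hk
    rw [Finset.mem_range] at hk
    rw [if_neg]
    intro h
    exact hm ⟨m - k, by omega⟩

lemma coeff_quad_pow (n : ℕ) :
    ((X ^ 2 - X + 1 : ℂ[X]) ^ n).coeff n = (-1) ^ n * centralTrinomial n := by
  have hq : (X ^ 2 - X + 1 : ℂ[X]) = -X + (1 + X ^ 2) := by ring
  rw [hq, add_pow, finset_sum_coeff]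
  have hterm : ∀ k ∈ Finset.range (n + 1),
      ((-X : ℂ[X]) ^ k * (1 + X ^ 2) ^ (n - k) * (n.choose k : ℂ[X])).coeff n
        = if Even (n - k) then
            ((-1 : ℂ) ^ k * (n.choose k) * ((n - k).choose ((n - k) / 2))) else 0 := by
    intro k hk
    rw [Finset.mem_range] at hk
    have hk' : k ≤ n := by omega
    have hC : ((-X : ℂ[X]) ^ k) = C ((-1 : ℂ) ^ k) * X ^ k := by
      rw [neg_pow]; simp [C_pow]
    rw [hC, mul_assoc, mul_assoc, coeff_C_mul, coeff_X_pow_mul', if_pos hk']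
    rw [← C_eq_natCast, coeff_mul_C, coeff_one_add_X_sq_pow]
    split <;> ring
  rw [Finset.sum_congr rfl hterm]
  rw [← Finset.sum_filter]
  have hrhs : ((-1:ℂ)) ^ n * (centralTrinomial n : ℂ)
      = ∑ m ∈ Finset.range (n / 2 + 1),
          ((-1:ℂ)) ^ n * ((n.choose (2 * m) : ℂ) * ((2 * m).choose m : ℂ)) := by
    rw [centralTrinomial, ← Finset.mul_sum]
    push_cast
    ring
  rw [hrhs]
  apply Finset.sum_nbij' (i := fun k => (n - k) / 2) (j := fun m => n - 2 * m)
  · intro k hk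
    simp only [Finset.mem_filter, Finset.mem_range] at hk ⊢
    omega
  · intro m hm
    simp only [Finset.mem_filter, Finset.mem_range] at hm ⊢
    exact ⟨by omega, ⟨m, by omega⟩⟩
  · intro k hk
    simp only [Finset.mem_filter, Finset.mem_range] at hk
    obtain ⟨hk1, t, ht⟩ := hk
    omega
  · intro m hm
    simp only [Finset.mem_range] at hm
    omega
  · intro k hk
    simp only [Finset.mem_filter, Finset.mem_range] at hk
    obtain ⟨hk1, t, ht⟩ := hk
    have h2 : 2 * ((n - k) / 2) = n - k := by omega
    have hsign : ((-1:ℂ)) ^ n = (-1) ^ k := by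
      have h1 : ((-1:ℂ)) ^ (n - k) = 1 := Even.neg_one_pow ⟨t, ht⟩
      calc ((-1:ℂ)) ^ n = (-1) ^ (k + (n - k)) := by
            rw [Nat.add_sub_cancel' (by omega : k ≤ n)]
        _ = (-1) ^ k * (-1) ^ (n - k) := pow_add _ _ _
        _ = (-1) ^ k := by rw [h1, mul_one]
    rw [h2, hsign, Nat.choose_symm (by omega : k ≤ n)]
    ring

lemma centralTrinomial_eq_sum (a b : ℂ) (hab : a * b = 1) (hs : a + b = -1) (n : ℕ) :
    ((-1 : ℂ)) ^ n * centralTrinomial n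
      = ∑ k ∈ Finset.range (n + 1), (n.choose k : ℂ) ^ 2 * (a ^ (n - k) * b ^ k) := by
  have key : ((X + C a) * (X + C b) : ℂ[X]) = X ^ 2 - X + 1 := by
    have h1 : ((X + C a) * (X + C b) : ℂ[X]) = X ^ 2 + C (a + b) * X + C (a * b) := by
      rw [C_add, C_mul]; ring
    rw [h1, hs, hab]
    simp only [map_neg, map_one]
    ring
  have h1 : (((X + C a) ^ n * (X + C b) ^ n : ℂ[X])).coeff n
      = ∑ k ∈ Finset.range (n + 1), (n.choose k : ℂ) ^ 2 * (a ^ (n - k) * b ^ k) := by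
    rw [coeff_mul, Finset.Nat.sum_antidiagonal_eq_sum_range_succ_mk]
    refine Finset.sum_congr rfl fun k hk => ?_
    rw [Finset.mem_range] at hk
    have hk' : k ≤ n := by omega
    rw [coeff_X_add_C_pow, coeff_X_add_C_pow, Nat.choose_symm hk', Nat.sub_sub_self hk']
    ring
  rw [← h1, ← mul_pow, key, coeff_quad_pow]

lemma zpow_helper (a b : ℂ) (hab : a * b = 1) {k n : ℕ} (hk : k ≤ n) :
    b ^ ((2 * k : ℤ) - n) = a ^ (n - k) * b ^ k := by
  have hb : b ≠ 0 := right_ne_zero_of_mul_eq_one hab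
  have hinv : a = b⁻¹ := eq_inv_of_mul_eq_one_left hab
  rw [show ((2 * k : ℤ) - n) = (k : ℤ) - ((n : ℤ) - k) by push_cast; ring,
    zpow_sub₀ hb, show ((n : ℤ) - k) = ((n - k : ℕ) : ℤ) by omega,
    zpow_natCast, zpow_natCast, div_eq_mul_inv, ← inv_pow, ← hinv, mul_comm]

theorem trinomial_omega_representation (n : ℕ) :
    ((-1 : ℂ) ^ n * centralTrinomial n
        = ∑ k ∈ Finset.range (n + 1), (Nat.choose n k : ℂ) ^ 2
            * omegaC ^ ((2 * k : ℤ) - n)) ∧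
    ((-1 : ℂ) ^ n * centralTrinomial n
        = ∑ k ∈ Finset.range (n + 1), (Nat.choose n k : ℂ) ^ 2
            * (starRingEnd ℂ omegaC) ^ ((2 * k : ℤ) - n)) := by
  have hab : (starRingEnd ℂ) omegaC * omegaC = 1 := by
    rw [mul_comm]; exact omega_mul_conj
  have hs : (starRingEnd ℂ) omegaC + omegaC = -1 := by
    rw [add_comm]; exact omega_add_conj
  constructor
  · rw [centralTrinomial_eq_sum _ _ hab hs n]
    refine Finset.sum_congr rfl fun k hk => ?_
    rw [Finset.mem_range] at hk
    rw [zpow_helper _ _ hab (by omega : k ≤ n)]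
  · rw [centralTrinomial_eq_sum _ _ omega_mul_conj omega_add_conj n]
    refine Finset.sum_congr rfl fun k hk => ?_
    rw [Finset.mem_range] at hk
    rw [zpow_helper _ _ omega_mul_conj (by omega : k ≤ n)]
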